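/- Let M be a chain complex of R-modules and (N_n)_{n∈Z} a family of R-modules. Then the contractible complex ⊕_{n∈Z} \overline{N_n}[n] lies in the subprojectivity domain of M if and only if N_n lies in the subprojectivity domain of the module M_n for every integer n. -/

import Mathlib

open CategoryTheory CategoryTheory.Limits

universe u

/-- `N` belongs to the subprojectivity domain of `M`: every morphism `M ⟶ N` factors
through a projective object. -/
def SubprojDomain {A : Type*} [Category A] (M N : A) : Prop :=
  ∀ f : M ⟶ N, ∃ (P : A) (_ : Projective P) (a : M ⟶ P) (b : P ⟶ N), a ≫ b = f

/-- The disc complex `\overline{N}[n]`: the module `N` placed in degrees `n+1` and `n`,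
connected by the identity, and `0` elsewhere. -/
def disc {R : Type u} [Ring R] (N : ModuleCat.{u} R) (n : ℤ) :
    ChainComplex (ModuleCat.{u} R) ℤ where
  X i := if i = n + 1 ∨ i = n then N else ModuleCat.of R PUnit
  d i j :=
    if h : i = n + 1 ∧ j = n then
      eqToHom (if_pos (Or.inl h.1)) ≫ eqToHom (if_pos (Or.inr h.2)).symm
    else 0
  shape i j h := by
    try dsimp only
    rw [dif_neg]
    rintro ⟨rfl, rfl⟩
    exact h rfl
  d_comp_d' i j k hij hjk := by
    simp only [ComplexShape.down_Rel] at hij hjk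
    try dsimp only
    by_cases hc : j = n + 1 ∧ k = n
    · rw [dif_neg (by omega), zero_comp]
    · rw [dif_neg hc, comp_zero]


section Aux

variable {R : Type u} [Ring R]

instance punit_target_sub (X : ModuleCat.{u} R) : Subsingleton (X ⟶ ModuleCat.of R PUnit) :=
  ⟨fun f g => ModuleCat.hom_ext (LinearMap.ext fun x => Subsingleton.elim _ _)⟩

instance punit_source_sub (X : ModuleCat.{u} R) : Subsingleton (ModuleCat.of R PUnit ⟶ X) :=
  ⟨fun f g => ModuleCat.hom_ext (LinearMap.ext fun x => by rw [Subsingleton.elim x 0, map_zero, map_zero])⟩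

lemma eq_of_target_punit {X Y : ModuleCat.{u} R} (e : Y = ModuleCat.of R PUnit)
    (f g : X ⟶ Y) : f = g := by subst e; exact Subsingleton.elim f g

lemma eq_of_source_punit {X Y : ModuleCat.{u} R} (e : X = ModuleCat.of R PUnit)
    (f g : X ⟶ Y) : f = g := by subst e; exact Subsingleton.elim f g

lemma discX_top (A : ModuleCat.{u} R) (n i : ℤ) (h : i = n + 1) :
    (disc A n).X i = A := if_pos (Or.inl h)

lemma discX_bot (A : ModuleCat.{u} R) (n i : ℤ) (h : i = n) :
    (disc A n).X i = A := if_pos (Or.inr h)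

lemma discX_punit (A : ModuleCat.{u} R) (n i : ℤ) (h1 : ¬ i = n + 1) (h2 : ¬ i = n) :
    (disc A n).X i = ModuleCat.of R PUnit := if_neg (by tauto)

lemma disc_d_eq (A : ModuleCat.{u} R) (n : ℤ) :
    (disc A n).d (n+1) n = eqToHom (discX_top A n _ rfl) ≫ eqToHom (discX_bot A n n rfl).symm := by
  dsimp only [disc]
  rw [dif_pos ⟨rfl, rfl⟩]

lemma disc_d_zero (A : ModuleCat.{u} R) (n i j : ℤ) (h : ¬ (i = n + 1 ∧ j = n)) :
    (disc A n).d i j = 0 := by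
  dsimp only [disc]
  rw [dif_neg h]
  rfl

/-- chain map `M ⟶ disc A n` from `g : M.X n ⟶ A`. -/
def toDisc (M : ChainComplex (ModuleCat.{u} R) ℤ) (A : ModuleCat.{u} R) (n : ℤ)
    (g : M.X n ⟶ A) : M ⟶ disc A n where
  f i :=
    if h1 : i = n then eqToHom (by rw [h1]) ≫ g ≫ eqToHom (discX_bot A n i h1).symm
    else if h2 : i = n + 1 then
      eqToHom (by rw [h2]) ≫ M.d (n+1) n ≫ g ≫ eqToHom (discX_top A n i h2).symm
    else 0
  comm' i j hij := by
    simp only [ComplexShape.down_Rel] at hij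
    subst hij
    by_cases h1 : j = n
    · subst h1
      rw [dif_pos rfl, dif_neg (by omega), dif_pos rfl, disc_d_eq]
      simp
    · by_cases h2 : j = n + 1
      · subst h2
        rw [dif_neg h1, dif_pos rfl, dif_neg (by omega), dif_neg (by omega),
          disc_d_zero A n _ _ (by omega)]
        simp
      · rw [dif_neg h1, dif_neg h2, disc_d_zero A n _ _ (by omega)]
        simp

lemma toDisc_f_n (M : ChainComplex (ModuleCat.{u} R) ℤ) (A : ModuleCat.{u} R) (n : ℤ)
    (g : M.X n ⟶ A) :
    (toDisc M A n g).f n = g ≫ eqToHom (discX_bot A n n rfl).symm := by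
  dsimp only [toDisc]
  rw [dif_pos rfl]
  simp

/-- chain map `disc A n ⟶ disc B n` from `φ : A ⟶ B`. -/
def discMap {A B : ModuleCat.{u} R} (φ : A ⟶ B) (n : ℤ) : disc A n ⟶ disc B n where
  f i :=
    if h : i = n + 1 ∨ i = n then
      eqToHom (if_pos h) ≫ φ ≫ eqToHom (if_pos h).symm
    else 0
  comm' i j hij := by
    simp only [ComplexShape.down_Rel] at hij
    subst hij
    by_cases h1 : j = n
    · subst h1
      rw [disc_d_eq, disc_d_eq, dif_pos (Or.inr rfl), dif_pos (Or.inl rfl)]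
      simp
      erw [eqToHom_trans, eqToHom_trans_assoc]
    · rw [disc_d_zero A n _ _ (by omega), disc_d_zero B n _ _ (by omega)]
      by_cases h2 : j + 1 = n + 1 ∨ j + 1 = n
      · rw [dif_pos h2]; simp
      · rw [dif_neg h2]; simp

/-- chain map `disc A n ⟶ C` from `u : A ⟶ C.X (n+1)`. -/
def fromDisc (C : ChainComplex (ModuleCat.{u} R) ℤ) (A : ModuleCat.{u} R) (n : ℤ)
    (u : A ⟶ C.X (n+1)) : disc A n ⟶ C where
  f i :=
    if h2 : i = n + 1 then eqToHom ((discX_top A n i h2).trans rfl) ≫ u ≫ eqToHom (by rw [h2])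
    else if h1 : i = n then eqToHom (discX_bot A n i h1) ≫ u ≫ C.d (n+1) n ≫ eqToHom (by rw [h1])
    else 0
  comm' i j hij := by
    simp only [ComplexShape.down_Rel] at hij
    subst hij
    by_cases h1 : j = n
    · subst h1
      rw [disc_d_eq, dif_pos rfl, dif_neg (by omega), dif_pos rfl]
      simp
    · rw [disc_d_zero A n _ _ (by omega)]
      by_cases h2 : j + 1 = n + 1
      · rw [dif_pos h2]
        have hj : ¬ j = n := h1
        exfalso; omega
      · rw [dif_neg h2]
        by_cases h3 : j + 1 = n
        · rw [dif_pos h3]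
          subst h3
          simp
        · rw [dif_neg h3]
          simp

lemma epi_of_degreewise {C D : ChainComplex (ModuleCat.{u} R) ℤ} (φ : C ⟶ D)
    (h : ∀ n, Epi (φ.f n)) : Epi φ := by
  constructor
  intro Z g h' w
  apply HomologicalComplex.hom_ext
  intro n
  have := congrArg (fun p => HomologicalComplex.Hom.f p n) w
  simp only [HomologicalComplex.comp_f] at this
  exact (cancel_epi (φ.f n)).mp this

lemma epi_discMap {A B : ModuleCat.{u} R} (φ : A ⟶ B) [Epi φ] (n : ℤ) :
    Epi (discMap φ n) := by
  apply epi_of_degreewise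
  intro i
  dsimp only [discMap]
  by_cases h : i = n + 1 ∨ i = n
  · rw [dif_pos h]
    have key : ∀ {X W : ModuleCat.{u} R} (p : X = A) (q : B = W),
        Epi (eqToHom p ≫ φ ≫ eqToHom q) := by
      intro X W p q
      subst p q
      simp only [eqToHom_refl, Category.id_comp, Category.comp_id]
      infer_instance
    exact key _ _
  · rw [dif_neg h]
    constructor
    intro Z g h' _
    exact eq_of_source_punit (discX_punit B n i (by tauto) (by tauto)) g h'

/-- a degreewise component of a projective complex is projective -/
lemma projective_X_of_projective (P : ChainComplex (ModuleCat.{u} R) ℤ)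
    (hP : Projective P) (n : ℤ) : Projective (P.X n) := by
  constructor
  intro E X f e he
  have hepi : Epi (discMap e n) := epi_discMap e n
  obtain ⟨ℓ, hℓ⟩ := hP.factors (toDisc P X n f) (discMap e n)
  refine ⟨ℓ.f n ≫ eqToHom (discX_bot E n n rfl), ?_⟩
  have := congrArg (fun p => HomologicalComplex.Hom.f p n) hℓ
  simp only [HomologicalComplex.comp_f] at this
  rw [toDisc_f_n] at this
  dsimp only [discMap] at this
  rw [dif_pos (Or.inr rfl)] at this
  have h2 := congrArg (fun q => q ≫ eqToHom (discX_bot X n n rfl)) this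
  simp at h2
  erw [eqToHom_trans, eqToHom_refl, Category.comp_id] at h2
  exact h2

lemma epi_f_of_epi {C D : ChainComplex (ModuleCat.{u} R) ℤ} (φ : C ⟶ D) [Epi φ] (n : ℤ) :
    Epi (φ.f n) :=
  inferInstanceAs (Epi ((HomologicalComplex.eval (ModuleCat.{u} R) (ComplexShape.down ℤ) n).map φ))

/-- disc on a projective module is a projective complex -/
lemma projective_disc {A : ModuleCat.{u} R} (hA : Projective A) (n : ℤ) :
    Projective (disc A n) := by
  constructor
  intro E X f e he
  have : Epi (e.f (n+1)) := epi_f_of_epi e (n+1)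
  obtain ⟨u, hu⟩ := hA.factors (eqToHom (discX_top A n (n+1) rfl).symm ≫ f.f (n+1)) (e.f (n+1))
  refine ⟨fromDisc E A n u, ?_⟩
  apply HomologicalComplex.hom_ext
  intro i
  simp only [HomologicalComplex.comp_f]
  dsimp only [fromDisc]
  by_cases h2 : i = n + 1
  · subst h2
    rw [dif_pos rfl]
    simp [hu]
  · by_cases h1 : i = n
    · subst h1
      rw [dif_neg (by omega), dif_pos rfl]
      have hcomm := f.comm (i+1) i
      have hcomm2 := e.comm (i+1) i
      rw [disc_d_eq] at hcomm
      simp only [Category.assoc, eqToHom_refl, Category.comp_id]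
      rw [← hcomm2, ← Category.assoc u, hu, Category.assoc, hcomm]
      simp
    · rw [dif_neg h2, dif_neg h1]
      exact (zero_comp (f := e.f i)) ▸ eq_of_source_punit (discX_punit A n i h2 h1) _ _

lemma projective_sigma {J : Type} (g : J → ChainComplex (ModuleCat.{u} R) ℤ)
    (hg : ∀ j, Projective (g j)) : Projective (∐ g) := by
  constructor
  intro E X f e he
  have lifts : ∀ j : J, ∃ ℓ : g j ⟶ E, ℓ ≫ e = Sigma.ι g j ≫ f :=
    fun j => (hg j).factors (Sigma.ι g j ≫ f) e
  choose ℓ hℓ using lifts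
  refine ⟨Sigma.desc ℓ, ?_⟩
  apply Sigma.hom_ext
  intro j
  rw [← Category.assoc, colimit.ι_desc]
  exact hℓ j

noncomputable section

/-- retraction onto one summand of a coproduct -/
def retr (N : ℤ → ModuleCat.{u} R) (m : ℤ) :
    (∐ fun n : ℤ => disc (N n) n) ⟶ disc (N m) m :=
  Sigma.desc (fun j => if h : j = m then eqToHom (by rw [h]) else 0)

lemma ι_retr_self (N : ℤ → ModuleCat.{u} R) (m : ℤ) :
    Sigma.ι (fun n : ℤ => disc (N n) n) m ≫ retr N m = 𝟙 _ := by
  simp [retr]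

lemma ι_retr_ne (N : ℤ → ModuleCat.{u} R) (j m : ℤ) (h : ¬ j = m) :
    Sigma.ι (fun n : ℤ => disc (N n) n) j ≫ retr N m = 0 := by
  simp [retr, h]

/-- projection out of a module coproduct -/
def sigmaProj (Z : ℤ → ModuleCat.{u} R) (m : ℤ) : (∐ Z) ⟶ Z m :=
  (ModuleCat.coprodIsoDirectSum Z).hom ≫
    ModuleCat.ofHom (DirectSum.component R ℤ (fun i => Z i) m)

lemma hom_ext_sigma {Z : ℤ → ModuleCat.{u} R} {W : ModuleCat.{u} R} (g h : W ⟶ ∐ Z)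
    (H : ∀ m, g ≫ sigmaProj Z m = h ≫ sigmaProj Z m) : g = h := by
  rw [← cancel_mono (ModuleCat.coprodIsoDirectSum Z).hom]
  apply ModuleCat.hom_ext
  apply LinearMap.ext
  intro x
  apply DFinsupp.ext
  intro m
  have hm := congrArg (fun q : W ⟶ Z m => q.hom x) (H m)
  simpa [sigmaProj, DirectSum.apply_eq_component R] using hm

def cmpr (N : ℤ → ModuleCat.{u} R) (k : ℤ) :
    (∐ fun n : ℤ => (disc (N n) n).X k) ⟶ (∐ fun n : ℤ => disc (N n) n).X k :=
  sigmaComparison (HomologicalComplex.eval (ModuleCat.{u} R) (ComplexShape.down ℤ) k)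
    (fun n : ℤ => disc (N n) n)

instance (N : ℤ → ModuleCat.{u} R) (k : ℤ) : IsIso (cmpr N k) := by
  dsimp [cmpr]; exact (inferInstance : IsIso (sigmaComparison (HomologicalComplex.eval (ModuleCat.{u} R) (ComplexShape.down ℤ) k)
    (fun n : ℤ => disc (N n) n)))

lemma retr_f_char (N : ℤ → ModuleCat.{u} R) (m k : ℤ) :
    cmpr N k ≫ (retr N m).f k = sigmaProj (fun n : ℤ => (disc (N n) n).X k) m := by
  apply Sigma.hom_ext
  intro j
  rw [← Category.assoc]
  dsimp only [cmpr]
  have h1 : (Sigma.ι (fun n : ℤ => (disc (N n) n).X k) j ≫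
      sigmaComparison (HomologicalComplex.eval (ModuleCat.{u} R) (ComplexShape.down ℤ) k)
        (fun n : ℤ => disc (N n) n)) = (Sigma.ι (fun n : ℤ => disc (N n) n) j).f k :=
    ι_comp_sigmaComparison (HomologicalComplex.eval (ModuleCat.{u} R) (ComplexShape.down ℤ) k)
      (fun n : ℤ => disc (N n) n) j
  erw [h1]
  rw [← HomologicalComplex.comp_f]
  by_cases hj : j = m
  · subst hj
    rw [ι_retr_self, HomologicalComplex.id_f]
    simp only [sigmaProj, ← Category.assoc, ModuleCat.ι_coprodIsoDirectSum_hom]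
    apply ModuleCat.hom_ext
    apply LinearMap.ext
    intro x
    exact (DirectSum.component.lof_self (R := R) (ι := ℤ)
      (M := fun i => ((disc (N i) i).X k : Type u)) j x).symm
  · rw [ι_retr_ne N j m hj, HomologicalComplex.zero_f]
    simp only [sigmaProj, ← Category.assoc, ModuleCat.ι_coprodIsoDirectSum_hom]
    apply ModuleCat.hom_ext
    apply LinearMap.ext
    intro x
    have h2 := DirectSum.component.of (R := R) (ι := ℤ)
      (M := fun i => ((disc (N i) i).X k : Type u)) m j x
    rw [dif_neg hj] at h2
    exact h2.symm

lemma hom_ext_deg (N : ℤ → ModuleCat.{u} R) {W : ModuleCat.{u} R} (k : ℤ)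
    (g h : W ⟶ (∐ fun n : ℤ => disc (N n) n).X k)
    (H : ∀ m, g ≫ (retr N m).f k = h ≫ (retr N m).f k) : g = h := by
  rw [← cancel_mono (inv (cmpr N k))]
  apply hom_ext_sigma
  intro m
  rw [Category.assoc, Category.assoc, ← retr_f_char]
  simp only [IsIso.inv_hom_id_assoc]
  exact H m

end


lemma tail_eq (N P : ℤ → ModuleCat.{u} R) (β : ∀ m, P m ⟶ N m) (s m k : ℤ) :
    (Sigma.ι (fun q : ℤ => disc (P q) q) s).f k ≫
      (Limits.Sigma.map fun q => discMap (β q) q).f k ≫ (retr N m).f k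
    = (discMap (β s) s).f k ≫ (Sigma.ι (fun n : ℤ => disc (N n) n) s ≫ retr N m).f k := by
  have h1 : Sigma.ι (fun q : ℤ => disc (P q) q) s ≫ Limits.Sigma.map (fun q => discMap (β q) q) =
      discMap (β s) s ≫ Sigma.ι (fun n : ℤ => disc (N n) n) s := by simp
  rw [← HomologicalComplex.comp_f (Limits.Sigma.map fun q => discMap (β q) q) (retr N m),
    ← HomologicalComplex.comp_f, ← Category.assoc, h1, Category.assoc,
    HomologicalComplex.comp_f]


end Aux

/-- the contractible complex `⊕_{n∈ℤ} \overline{N_n}[n]` lies in the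
subprojectivity domain of the complex `M` iff `N_n` lies in the subprojectivity domain of
the module `M_n` for every `n`. -/
theorem sigma_disc_subprojDomain_iff
    {R : Type u} [Ring R] (M : ChainComplex (ModuleCat.{u} R) ℤ)
    (N : ℤ → ModuleCat.{u} R) :
    SubprojDomain M (∐ fun n : ℤ => disc (N n) n) ↔
      ∀ n : ℤ, SubprojDomain (M.X n) (N n) := by
  constructor
  · intro h n g
    obtain ⟨P, hP, a, b, hab⟩ := h (toDisc M (N n) n g ≫ Sigma.ι (fun n : ℤ => disc (N n) n) n)
    refine ⟨P.X n, projective_X_of_projective P hP n, a.f n,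
      b.f n ≫ (retr N n).f n ≫ eqToHom (discX_bot (N n) n n rfl), ?_⟩
    have h2 := congrArg (fun q => q ≫ retr N n) hab
    simp only [Category.assoc, ι_retr_self, Category.comp_id] at h2
    have h3 := congrArg (fun q => HomologicalComplex.Hom.f q n) h2
    simp only [HomologicalComplex.comp_f] at h3
    rw [toDisc_f_n] at h3
    have h4 := congrArg (fun q => q ≫ eqToHom (discX_bot (N n) n n rfl)) h3
    simpa using h4
  · intro h f
    have key : ∀ m : ℤ, ∃ (Pm : ModuleCat.{u} R) (_ : Projective Pm)
        (αm : M.X m ⟶ Pm) (βm : Pm ⟶ N m),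
        αm ≫ βm = f.f m ≫ (retr N m).f m ≫ eqToHom (discX_bot (N m) m m rfl) :=
      fun m => h m _
    choose P hP α β hfac using key
    refine ⟨∐ fun m : ℤ => disc (P m) m,
      projective_sigma _ (fun m => projective_disc (hP m) m),
      Homotopy.nullHomotopicMap' (fun i j hij =>
        α i ≫ eqToHom (discX_top (P i) i j (by simp only [ComplexShape.down_Rel] at hij; omega)).symm ≫
          (Sigma.ι (fun m : ℤ => disc (P m) m) i).f j),
      Limits.Sigma.map (fun m => discMap (β m) m), ?_⟩
    apply HomologicalComplex.hom_ext
    intro k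
    apply hom_ext_deg N k
    intro m
    rw [HomologicalComplex.comp_f, Category.assoc]
    by_cases hm : k = m
    · subst hm
      -- degree k, summand k
      rw [Homotopy.nullHomotopicMap'_f
        (show (ComplexShape.down ℤ).Rel (k+1) k by simp)
        (show (ComplexShape.down ℤ).Rel k (k-1) by simp)]
      simp only [Preadditive.add_comp, Category.assoc]
      rw [tail_eq N P β (k-1) k k, ι_retr_ne N (k-1) k (by omega), HomologicalComplex.zero_f]
      simp only [comp_zero, zero_add]
      rw [HomologicalComplex.Hom.comm_assoc (Sigma.ι (fun m : ℤ => disc (P m) m) k) (k+1) k,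
        disc_d_eq]
      simp only [Category.assoc]
      rw [tail_eq N P β k k k, ι_retr_self, HomologicalComplex.id_f, Category.comp_id]
      -- LHS: α k ≫ eq ≫ eq ≫ eq ≫ (discMap (β k) k).f k
      have hdm : (discMap (β k) k).f k =
          eqToHom (discX_bot (P k) k k rfl) ≫ β k ≫ eqToHom (discX_bot (N k) k k rfl).symm := by
        dsimp only [discMap]; rw [dif_pos (Or.inr rfl)]
      rw [hdm]
      have hf : f.f k ≫ (retr N k).f k =
          (α k ≫ β k) ≫ eqToHom (discX_bot (N k) k k rfl).symm := by
        rw [hfac k]; simp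
      rw [hf]
      simp
    · by_cases hm2 : k = m + 1
      · subst hm2
        rw [Homotopy.nullHomotopicMap'_f
          (show (ComplexShape.down ℤ).Rel (m+1+1) (m+1) by simp)
          (show (ComplexShape.down ℤ).Rel (m+1) m by simp)]
        simp only [Preadditive.add_comp, Category.assoc]
        rw [HomologicalComplex.Hom.comm_assoc (Sigma.ι (fun q : ℤ => disc (P q) q) (m+1))]
        rw [tail_eq N P β (m+1) m (m+1), ι_retr_ne N (m+1) m (by omega),
          HomologicalComplex.zero_f, comp_zero, comp_zero, comp_zero, comp_zero, add_zero]
        rw [tail_eq N P β m m (m+1), ι_retr_self, HomologicalComplex.id_f, Category.comp_id]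
        have hdm : (discMap (β m) m).f (m+1) =
            eqToHom (discX_top (P m) m (m+1) rfl) ≫ β m ≫
              eqToHom (discX_top (N m) m (m+1) rfl).symm := by
          dsimp only [discMap]; rw [dif_pos (Or.inl rfl)]
        rw [hdm]
        -- now handle RHS via chain conditions
        rw [← cancel_mono (eqToHom (discX_top (N m) m (m+1) rfl))]
        have hretr : (retr N m).f (m+1) ≫ eqToHom (discX_top (N m) m (m+1) rfl) =
            (∐ fun n : ℤ => disc (N n) n).d (m+1) m ≫ (retr N m).f m ≫
              eqToHom (discX_bot (N m) m m rfl) := by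
          have c1 := (retr N m).comm (m+1) m
          rw [disc_d_eq] at c1
          have c2 := congrArg (fun q => q ≫ eqToHom (discX_bot (N m) m m rfl)) c1
          simp only [Category.assoc, eqToHom_trans, eqToHom_refl, Category.comp_id] at c2
          simpa using c2
        simp only [Category.assoc]
        rw [hretr, HomologicalComplex.Hom.comm_assoc f (m+1) m, ← hfac m]
        simp
      · exact eq_of_target_punit (discX_punit (N m) m k hm2 hm) _ _
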